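/- For every integer n ≥ 100 and k = ⌊n/2⌋, one has E_k(n) ≤ 5; that is, there exists a Boolean function f from the k-element subsets of [n] to {0,1} whose deterministic query complexity D_k(f) is at least n − 5. -/

import Mathlib

/-- A (binary) decision tree over ground set `[n]` (positions `Fin n`):
leaves are labelled with a Boolean output, inner nodes with a query `i ∈ [n]`;
the left subtree corresponds to the answer `i ∉ A`, the right one to `i ∈ A`. -/
inductive DecTree (n : ℕ) : Type
  | leaf : Bool → DecTree n
  | node : Fin n → DecTree n → DecTree n → DecTree n

namespace DecTree

/-- The height (depth) of a decision tree: the maximum number of queries on a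
root-to-leaf path. -/
def depth {n : ℕ} : DecTree n → ℕ
  | leaf _ => 0
  | node _ t0 t1 => max (depth t0) (depth t1) + 1

/-- Evaluate a decision tree on an input set `A ⊆ [n]`. -/
def eval {n : ℕ} : DecTree n → Finset (Fin n) → Bool
  | leaf b, _ => b
  | node i t0 t1, A => if i ∈ A then eval t1 A else eval t0 A

end DecTree

/-- The slice: the `k`-element subsets of `[n]`. -/
def Slice (n k : ℕ) : Type := {A : Finset (Fin n) // A.card = k}

/-- A decision tree computes `f` on the slice if it evaluates to `f A` for every
`A` in the slice. -/
def Computes {n k : ℕ} (T : DecTree n) (f : Slice n k → Bool) : Prop :=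
  ∀ A : Slice n k, T.eval A.val = f A

/-- Deterministic query complexity of `f` on the slice: the minimum height of a
decision tree computing `f`. -/
noncomputable def Dquery (n k : ℕ) (f : Slice n k → Bool) : ℕ :=
  sInf {d : ℕ | ∃ T : DecTree n, T.depth ≤ d ∧ Computes T f}

/-- `Dmax n k`: the maximum deterministic query complexity over all Boolean
functions on the slice of `k`-subsets of `[n]`. -/
noncomputable def Dmax (n k : ℕ) : ℕ :=
  sSup {d : ℕ | ∃ f : Slice n k → Bool, Dquery n k f = d}

/-- `Equery n k = n - Dmax n k`. -/
noncomputable def Equery (n k : ℕ) : ℕ := n - Dmax n k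



deriving instance DecidableEq for DecTree

namespace Hard

open DecTree

variable {n : ℕ}

/-- Build a complete tree querying everything in `l`. -/
def build (F : Finset (Fin n) → Bool) : List (Fin n) → Finset (Fin n) → DecTree n
  | [], acc => DecTree.leaf (F acc)
  | i :: l, acc => DecTree.node i (build F l acc) (build F l (insert i acc))

lemma depth_build (F : Finset (Fin n) → Bool) (l : List (Fin n)) (acc : Finset (Fin n)) :
    (build F l acc).depth = l.length := by
  induction l generalizing acc with
  | nil => rfl
  | cons i l ih => simp [build, depth, ih]

lemma eval_build (F : Finset (Fin n) → Bool) (l : List (Fin n)) (acc : Finset (Fin n))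
    (A : Finset (Fin n)) :
    (build F l acc).eval A = F (acc ∪ A.filter (· ∈ l)) := by
  induction l generalizing acc with
  | nil => simp [build, eval]
  | cons i l ih =>
    simp only [build, eval]
    by_cases hi : i ∈ A
    · rw [if_pos hi, ih]
      congr 1
      ext x
      simp only [Finset.mem_union, Finset.mem_insert, Finset.mem_filter, List.mem_cons]
      constructor
      · rintro (⟨rfl | hx⟩ | ⟨hxA, hxl⟩)
        · exact Or.inr ⟨hi, Or.inl rfl⟩
        · exact Or.inl ‹x ∈ acc›
        · exact Or.inr ⟨hxA, Or.inr hxl⟩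
      · rintro (hx | ⟨hxA, rfl | hxl⟩)
        · exact Or.inl (Or.inr hx)
        · exact Or.inl (Or.inl rfl)
        · exact Or.inr ⟨hxA, hxl⟩
    · rw [if_neg hi, ih]
      congr 1
      ext x
      simp only [Finset.mem_union, Finset.mem_filter, List.mem_cons]
      constructor
      · rintro (hx | ⟨hxA, hxl⟩)
        · exact Or.inl hx
        · exact Or.inr ⟨hxA, Or.inr hxl⟩
      · rintro (hx | ⟨hxA, rfl | hxl⟩)
        · exact Or.inl hx
        · exact absurd hxA hi
        · exact Or.inr ⟨hxA, hxl⟩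

/-- Every slice function is computed by a tree of depth `n`. -/
lemma exists_full_tree {k : ℕ} (f : Slice n k → Bool) :
    ∃ T : DecTree n, T.depth ≤ n ∧ Computes T f := by
  classical
  set F : Finset (Fin n) → Bool := fun s => if h : s.card = k then f ⟨s, h⟩ else false with hF
  refine ⟨build F (List.finRange n) ∅, ?_, ?_⟩
  · rw [depth_build, List.length_finRange]
  · intro A
    rw [eval_build]
    have : (∅ ∪ A.val.filter (· ∈ List.finRange n)) = A.val := by
      simp [Finset.filter_true_of_mem, List.mem_finRange]
    rw [this, hF]
    simp [A.2]
    rfl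


lemma Dquery_set_full {k : ℕ} (f : Slice n k → Bool) : True := trivial

/-- Canonical trees with given free set and budgets (b1 ones, b0 zeros) and depth budget d. -/
def CT (n : ℕ) : Finset (Fin n) → ℕ → ℕ → ℕ → Finset (DecTree n)
  | _, _, _, 0 => {DecTree.leaf false, DecTree.leaf true}
  | free, b1, b0, d + 1 =>
    if b1 = 0 ∨ b0 = 0 then {DecTree.leaf false, DecTree.leaf true}
    else
      {DecTree.leaf false, DecTree.leaf true} ∪
        free.biUnion (fun i =>
          Finset.image₂ (DecTree.node i) (CT n (free.erase i) b1 (b0 - 1) d)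
            (CT n (free.erase i) (b1 - 1) b0 d))

lemma leaf_mem_CT (free : Finset (Fin n)) (b1 b0 d : ℕ) (v : Bool) :
    DecTree.leaf v ∈ CT n free b1 b0 d := by
  have hv : DecTree.leaf v ∈ ({DecTree.leaf false, DecTree.leaf true} : Finset (DecTree n)) := by
    cases v <;> simp
  cases d with
  | zero => exact hv
  | succ d =>
    rw [CT]
    split
    · exact hv
    · exact Finset.mem_union_left _ hv

lemma CT_mono (free : Finset (Fin n)) (b1 b0 : ℕ) :
    ∀ {d d' : ℕ}, d ≤ d' → CT n free b1 b0 d ⊆ CT n free b1 b0 d' := by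
  intro d
  induction d generalizing free b1 b0 with
  | zero =>
    intro d' _ T hT
    have : T = DecTree.leaf false ∨ T = DecTree.leaf true := by
      simpa [CT] using hT
    rcases this with rfl | rfl <;> exact leaf_mem_CT _ _ _ _ _
  | succ d ih =>
    intro d' hd T hT
    obtain ⟨d'', rfl⟩ : ∃ d'', d' = d'' + 1 := ⟨d' - 1, by omega⟩
    rw [CT] at hT ⊢
    by_cases hb : b1 = 0 ∨ b0 = 0
    · rw [if_pos hb] at hT
      rw [if_pos hb]
      exact hT
    · rw [if_neg hb] at hT
      rw [if_neg hb]
      rcases Finset.mem_union.1 hT with h | h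
      · exact Finset.mem_union_left _ h
      · refine Finset.mem_union_right _ ?_
        rw [Finset.mem_biUnion] at h ⊢
        obtain ⟨i, hi, hT⟩ := h
        refine ⟨i, hi, ?_⟩
        rw [Finset.mem_image₂] at hT ⊢
        obtain ⟨t0, ht0, t1, ht1, rfl⟩ := hT
        exact ⟨t0, ih _ _ _ (by omega) ht0, t1, ih _ _ _ (by omega) ht1, rfl⟩

/-- Numeric bound on the number of canonical trees. -/
def B : ℕ → ℕ → ℕ → ℕ → ℕ
  | _, _, _, 0 => 2
  | m, b1, b0, d + 1 =>
    if b1 = 0 ∨ b0 = 0 then 2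
    else 2 + m * B (m - 1) b1 (b0 - 1) d * B (m - 1) (b1 - 1) b0 d

lemma card_CT_le (free : Finset (Fin n)) (b1 b0 d : ℕ) :
    (CT n free b1 b0 d).card ≤ B free.card b1 b0 d := by
  induction d generalizing free b1 b0 with
  | zero =>
    simp only [CT, B]
    exact le_trans (Finset.card_insert_le _ _) (by simp)
  | succ d ih =>
    rw [CT, B]
    split
    · exact le_trans (Finset.card_insert_le _ _) (by simp)
    · calc ({DecTree.leaf false, DecTree.leaf true} ∪ _ : Finset (DecTree n)).card
          ≤ ({DecTree.leaf false, DecTree.leaf true} : Finset (DecTree n)).card + _ :=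
            Finset.card_union_le _ _
        _ ≤ 2 + free.card * B (free.card - 1) b1 (b0 - 1) d * B (free.card - 1) (b1 - 1) b0 d := by
            gcongr
            · exact le_trans (Finset.card_insert_le _ _) (by simp)
            · calc (free.biUnion _).card ≤ ∑ i ∈ free, (Finset.image₂ (DecTree.node i)
                      (CT n (free.erase i) b1 (b0 - 1) d) (CT n (free.erase i) (b1 - 1) b0 d)).card :=
                    Finset.card_biUnion_le
                _ ≤ ∑ _i ∈ free, B (free.card - 1) b1 (b0 - 1) d * B (free.card - 1) (b1 - 1) b0 d := by
                    refine Finset.sum_le_sum fun i hi => ?_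
                    calc (Finset.image₂ _ _ _).card
                        ≤ (CT n (free.erase i) b1 (b0 - 1) d).card *
                          (CT n (free.erase i) (b1 - 1) b0 d).card := Finset.card_image₂_le _ _ _
                      _ ≤ _ := by
                          have h0 := ih (free.erase i) b1 (b0 - 1)
                          have h1 := ih (free.erase i) (b1 - 1) b0
                          rw [Finset.card_erase_of_mem hi] at h0 h1
                          exact Nat.mul_le_mul h0 h1
                _ = free.card * (B (free.card - 1) b1 (b0 - 1) d * B (free.card - 1) (b1 - 1) b0 d) := by
                    rw [Finset.sum_const, smul_eq_mul]
                _ = free.card * B (free.card - 1) b1 (b0 - 1) d * B (free.card - 1) (b1 - 1) b0 d := by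
                    ring

/-- Canonicalization: any tree has a canonical equivalent on consistent inputs. -/
lemma canon {k : ℕ} (hk : k ≤ n) (T : DecTree n) :
    ∀ (d : ℕ) (S1 S0 : Finset (Fin n)), T.depth ≤ d →
      Disjoint S1 S0 → S1.card ≤ k → S0.card ≤ n - k →
      ∃ T' ∈ CT n ((Finset.univ \ S1) \ S0) (k - S1.card) ((n - k) - S0.card) d,
        ∀ A : Finset (Fin n), A.card = k → S1 ⊆ A → Disjoint A S0 →
          T'.eval A = T.eval A := by
  induction T with
  | leaf b =>
    intro d S1 S0 _ _ _ _
    exact ⟨DecTree.leaf b, leaf_mem_CT _ _ _ _ _, fun A _ _ _ => rfl⟩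
  | node i t0 t1 ih0 ih1 =>
    intro d S1 S0 hd hdisj hc1 hc0
    obtain ⟨d', rfl⟩ : ∃ d', d = d' + 1 := ⟨d - 1, by simp [depth] at hd; omega⟩
    have hd0 : t0.depth ≤ d' := by simp [depth] at hd; omega
    have hd1 : t1.depth ≤ d' := by simp [depth] at hd; omega
    by_cases hb1 : k - S1.card = 0
    · -- all consistent inputs equal S1
      have hS1k : S1.card = k := by omega
      refine ⟨DecTree.leaf ((DecTree.node i t0 t1).eval S1), leaf_mem_CT _ _ _ _ _,
        fun A hA hsub _ => ?_⟩
      rw [Finset.eq_of_subset_of_card_le hsub (by omega)]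
      rfl
    · by_cases hb0 : (n - k) - S0.card = 0
      · -- all consistent inputs equal univ \ S0
        have hS0 : S0.card = n - k := by omega
        refine ⟨DecTree.leaf ((DecTree.node i t0 t1).eval (Finset.univ \ S0)),
          leaf_mem_CT _ _ _ _ _, fun A hA _ hdisjA => ?_⟩
        have hsub : A ⊆ Finset.univ \ S0 := by
          intro x hx
          simp only [Finset.mem_sdiff, Finset.mem_univ, true_and]
          exact fun hxS0 => (Finset.disjoint_left.1 hdisjA) hx hxS0
        have hcard : (Finset.univ \ S0).card = k := by
          rw [Finset.card_sdiff_of_subset (Finset.subset_univ _), Finset.card_univ, Fintype.card_fin, hS0]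
          omega
        rw [Finset.eq_of_subset_of_card_le hsub (by omega)]
        rfl
      · by_cases hi1 : i ∈ S1
        · -- consistent inputs contain i: node evaluates to t1
          obtain ⟨T', hT'mem, hT'⟩ := ih1 d' S1 S0 hd1 hdisj hc1 hc0
          refine ⟨T', CT_mono _ _ _ (Nat.le_succ d') hT'mem, fun A hA hsub hdisjA => ?_⟩
          rw [hT' A hA hsub hdisjA, eval, if_pos (hsub hi1)]
        · by_cases hi0 : i ∈ S0
          · obtain ⟨T', hT'mem, hT'⟩ := ih0 d' S1 S0 hd0 hdisj hc1 hc0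
            refine ⟨T', CT_mono _ _ _ (Nat.le_succ d') hT'mem, fun A hA hsub hdisjA => ?_⟩
            have hiA : i ∉ A := fun hiA => (Finset.disjoint_left.1 hdisjA) hiA hi0
            rw [hT' A hA hsub hdisjA, eval, if_neg hiA]
          · -- i is free: recurse on both sides
            have hfree : i ∈ (Finset.univ \ S1) \ S0 := by
              simp [Finset.mem_sdiff, hi1, hi0]
            obtain ⟨T0', hT0mem, hT0⟩ := ih0 d' S1 (insert i S0) hd0
              (by rw [Finset.disjoint_insert_right]; exact ⟨hi1, hdisj⟩) hc1
              (by rw [Finset.card_insert_of_notMem hi0]; omega)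
            obtain ⟨T1', hT1mem, hT1⟩ := ih1 d' (insert i S1) S0 hd1
              (by rw [Finset.disjoint_insert_left]; exact ⟨hi0, hdisj⟩)
              (by rw [Finset.card_insert_of_notMem hi1]; omega) hc0
            have hset0 : (Finset.univ \ S1) \ insert i S0 = ((Finset.univ \ S1) \ S0).erase i := by
              ext x
              simp only [Finset.mem_sdiff, Finset.mem_univ, true_and, Finset.mem_insert,
                Finset.mem_erase]
              tauto
            have hset1 : (Finset.univ \ insert i S1) \ S0 = ((Finset.univ \ S1) \ S0).erase i := by
              ext x
              simp only [Finset.mem_sdiff, Finset.mem_univ, true_and, Finset.mem_insert,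
                Finset.mem_erase]
              tauto
            rw [hset0, Finset.card_insert_of_notMem hi0] at hT0mem
            rw [hset1, Finset.card_insert_of_notMem hi1] at hT1mem
            have e0 : (n - k) - (S0.card + 1) = ((n - k) - S0.card) - 1 := by omega
            have e1 : k - (S1.card + 1) = (k - S1.card) - 1 := by omega
            rw [e0] at hT0mem
            rw [e1] at hT1mem
            refine ⟨DecTree.node i T0' T1', ?_, ?_⟩
            · rw [CT, if_neg (by tauto)]
              refine Finset.mem_union_right _ (Finset.mem_biUnion.2 ⟨i, hfree, ?_⟩)
              exact Finset.mem_image₂.2 ⟨T0', hT0mem, T1', hT1mem, rfl⟩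
            · intro A hA hsub hdisjA
              by_cases hiA : i ∈ A
              · rw [eval, if_pos hiA, eval, if_pos hiA]
                exact hT1 A hA (Finset.insert_subset hiA hsub) hdisjA
              · rw [eval, if_neg hiA, eval, if_neg hiA]
                exact hT0 A hA hsub (by rw [Finset.disjoint_insert_right]; exact ⟨hiA, hdisjA⟩)

/-- Per-level weight. -/
def W (j : ℕ) : ℕ := if j ≤ 6 then 1 else Nat.log 2 j + 2

/-- Binomial coefficient with integer argument (zero outside range). -/
def ch (M : ℕ) (r : ℤ) : ℕ := if 0 ≤ r ∧ r ≤ M then M.choose r.toNat else 0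

lemma ch_eq_choose (M : ℕ) (r : ℤ) (hr : 0 ≤ r) : ch M r = M.choose r.toNat := by
  unfold ch
  by_cases h : r ≤ M
  · rw [if_pos ⟨hr, h⟩]
  · rw [if_neg (by tauto)]
    rw [eq_comm, Nat.choose_eq_zero_iff]
    omega

lemma ch_neg (M : ℕ) (r : ℤ) (hr : r < 0) : ch M r = 0 := by
  unfold ch
  rw [if_neg (by omega)]

lemma ch_pascal (M : ℕ) (r : ℤ) (hM : 1 ≤ M) :
    ch M r = ch (M - 1) r + ch (M - 1) (r - 1) := by
  obtain ⟨M', rfl⟩ : ∃ M', M = M' + 1 := ⟨M - 1, by omega⟩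
  rcases lt_trichotomy r 0 with h | h | h
  · rw [ch_neg _ _ h, ch_neg _ _ h, ch_neg _ _ (by omega)]
  · subst h
    rw [ch_eq_choose _ _ le_rfl, ch_eq_choose _ _ le_rfl, ch_neg _ _ (by omega)]
    simp
  · have h1 : (0:ℤ) ≤ r := by omega
    rw [ch_eq_choose _ _ h1, ch_eq_choose _ _ h1, ch_eq_choose _ _ (by omega)]
    have : r.toNat = (r - 1).toNat + 1 := by omega
    rw [this]
    simp only [Nat.add_sub_cancel]
    rw [Nat.choose_succ_succ]
    simp only [Nat.succ_eq_add_one]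
    omega

lemma ch_zero (r : ℤ) : ch 0 r = if r = 0 then 1 else 0 := by
  unfold ch
  split_ifs with h1 h2 h2
  · simp [h2]
  · omega
  · omega
  · rfl

/-- Window sum. -/
def HH (j m : ℕ) (b : ℤ) : ℕ := ∑ s ∈ Finset.Icc 1 (j - 1), ch (m - j) (b - (s : ℕ))

/-- Wall terms. -/
def wall (j m : ℕ) (b : ℤ) : ℕ := ch (m - j) b + ch (m - j) (b - (j : ℕ))

/-- The potential. -/
def G (m : ℕ) (b : ℤ) : ℕ := ∑ j ∈ Finset.Icc 6 m, (W j * HH j m b + wall j m b)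

lemma HH_top (m : ℕ) (hm : 6 ≤ m) (b : ℤ) (hb1 : 1 ≤ b) (hb2 : b ≤ (m : ℤ) - 1) :
    HH m m b = 1 := by
  unfold HH
  rw [Nat.sub_self]
  have hmem : b.toNat ∈ Finset.Icc 1 (m - 1) := by
    rw [Finset.mem_Icc]; omega
  rw [Finset.sum_eq_single_of_mem b.toNat hmem]
  · rw [ch_zero, if_pos (by omega)]
  · intro s _ hs
    rw [ch_zero, if_neg (by omega)]

lemma G_rec (m : ℕ) (hm : 7 ≤ m) (b : ℤ) (hb1 : 1 ≤ b) (hb2 : b ≤ (m : ℤ) - 1) :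
    G m b = W m + G (m - 1) b + G (m - 1) (b - 1) := by
  obtain ⟨m', rfl⟩ : ∃ m', m = m' + 1 := ⟨m - 1, by omega⟩
  have h6 : 6 ≤ m' := by omega
  unfold G
  rw [Finset.sum_Icc_succ_top (by omega)]
  have htop : W (m' + 1) * HH (m' + 1) (m' + 1) b + wall (m' + 1) (m' + 1) b = W (m' + 1) := by
    rw [HH_top _ (by omega) _ hb1 (by push_cast; push_cast at hb2; omega)]
    unfold wall
    rw [Nat.sub_self, ch_zero, ch_zero, if_neg (by omega), if_neg (by push_cast; omega)]
    ring
  rw [htop]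
  have hsplit : ∀ j ∈ Finset.Icc 6 m',
      W j * HH j (m' + 1) b + wall j (m' + 1) b =
        (W j * HH j m' b + wall j m' b) + (W j * HH j m' (b - 1) + wall j m' (b - 1)) := by
    intro j hj
    rw [Finset.mem_Icc] at hj
    have hMj : 1 ≤ m' + 1 - j := by omega
    have hHH : HH j (m' + 1) b = HH j m' b + HH j m' (b - 1) := by
      unfold HH
      rw [← Finset.sum_add_distrib]
      refine Finset.sum_congr rfl fun s _ => ?_
      have e1 : m' + 1 - j = (m' - j) + 1 := by omega
      have e2 : (m' - j) + 1 - 1 = m' - j := by omega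
      rw [e1, ch_pascal _ _ (by omega), e2]
      congr 2
      ring
    have hwall : wall j (m' + 1) b = wall j m' b + wall j m' (b - 1) := by
      unfold wall
      have e1 : m' + 1 - j = (m' - j) + 1 := by omega
      have e2 : (m' - j) + 1 - 1 = m' - j := by omega
      rw [e1, ch_pascal _ b (by omega), ch_pascal _ (b - (j:ℕ)) (by omega), e2]
      have : b - (j:ℕ) - 1 = b - 1 - (j:ℕ) := by ring
      rw [this]
      ring
    rw [hHH, hwall]
    ring
  rw [Finset.sum_congr rfl hsplit, Finset.sum_add_distrib]
  have : m' + 1 - 1 = m' := by omega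
  rw [this]
  ring

lemma G_ge_one (m : ℕ) (hm : 6 ≤ m) (b : ℤ) (hb1 : 0 ≤ b) (hb2 : b ≤ (m : ℤ)) :
    1 ≤ G m b := by
  have hmem : m ∈ Finset.Icc 6 m := by rw [Finset.mem_Icc]; omega
  have hterm : 1 ≤ W m * HH m m b + wall m m b := by
    rcases eq_or_lt_of_le hb1 with h0 | h0
    · -- b = 0 : wall gives ch 0 0 = 1
      unfold wall
      rw [Nat.sub_self, ch_zero, if_pos h0.symm]
      omega
    · rcases eq_or_lt_of_le hb2 with hm' | hm'
      · -- b = m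
        unfold wall
        rw [Nat.sub_self, ch_zero (b - (m:ℕ)), if_pos (by push_cast; omega)]
        omega
      · have : HH m m b = 1 := HH_top m hm b (by omega) (by omega)
        have hW : 1 ≤ W m := by unfold W; split <;> omega
        calc 1 ≤ W m * HH m m b := by rw [this]; omega
          _ ≤ _ := Nat.le_add_right _ _
  calc 1 ≤ W m * HH m m b + wall m m b := hterm
    _ ≤ G m b := Finset.single_le_sum (f := fun j => W j * HH j m b + wall j m b)
        (fun _ _ => Nat.zero_le _) hmem

lemma two_mul_le_pow_W (m : ℕ) (hm : 7 ≤ m) : 2 * m ≤ 2 ^ W m := by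
  have h := Nat.lt_pow_succ_log_self (b := 2) (by norm_num) m
  unfold W
  rw [if_neg (by omega)]
  have : 2 ^ (Nat.log 2 m + 2) = 2 * 2 ^ (Nat.log 2 m + 1) := by ring
  rw [this]
  omega

lemma B_le_pow_G : ∀ m : ℕ, 6 ≤ m → ∀ b : ℕ, b ≤ m → B m b (m - b) (m - 6) ≤ 2 ^ G m (b : ℤ) := by
  intro m
  induction m using Nat.strong_induction_on with
  | _ m ih =>
    intro hm b hb
    have hG1 : 1 ≤ G m (b : ℤ) := G_ge_one m hm _ (by positivity) (by exact_mod_cast hb)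
    rcases eq_or_lt_of_le hm with h6 | h7
    · -- m = 6
      subst h6
      show B 6 b (6 - b) 0 ≤ _
      rw [show B 6 b (6 - b) 0 = 2 from rfl]
      calc (2:ℕ) = 2 ^ 1 := rfl
        _ ≤ 2 ^ G 6 (b:ℤ) := Nat.pow_le_pow_right (by norm_num) hG1
    · have h7 : 7 ≤ m := h7
      obtain ⟨d', hd'⟩ : ∃ d', m - 6 = d' + 1 := ⟨m - 7, by omega⟩
      rw [hd']
      rw [B]
      by_cases hwall : b = 0 ∨ m - b = 0
      · rw [if_pos hwall]
        calc (2:ℕ) = 2 ^ 1 := rfl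
          _ ≤ 2 ^ G m (b:ℤ) := Nat.pow_le_pow_right (by norm_num) hG1
      · rw [if_neg hwall]
        push_neg at hwall
        have hb1 : 1 ≤ b := by omega
        have hbm : b ≤ m - 1 := by omega
        have e0 : m - b - 1 = (m - 1) - b := by omega
        have e1 : m - b = (m - 1) - (b - 1) := by omega
        have ed : d' = (m - 1) - 6 := by omega
        have hX := ih (m - 1) (by omega) (by omega) b (by omega)
        have hY := ih (m - 1) (by omega) (by omega) (b - 1) (by omega)
        have hcast : ((b - 1 : ℕ) : ℤ) = (b : ℤ) - 1 := by push_cast [hb1]; ring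
        rw [hcast] at hY
        have hrec := G_rec m h7 (b : ℤ) (by exact_mod_cast hb1)
          (by push_cast; exact_mod_cast (by omega : (b:ℤ) ≤ (m:ℤ) - 1))
        have hG0 : 1 ≤ G (m-1) ((b:ℤ)) := G_ge_one (m-1) (by omega) _ (by positivity)
          (by push_cast; omega)
        have hG1' : 1 ≤ G (m-1) ((b:ℤ) - 1) := G_ge_one (m-1) (by omega) _ (by omega)
          (by push_cast; omega)
        calc 2 + m * B (m - 1) b (m - b - 1) d' * B (m - 1) (b - 1) (m - b) d'
            ≤ 2 + m * 2 ^ G (m-1) ((b:ℤ)) * 2 ^ G (m-1) ((b:ℤ) - 1) := by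
              have hX' : B (m - 1) b (m - b - 1) d' ≤ 2 ^ G (m-1) ((b:ℤ)) := by
                rw [e0, ed]; exact hX
              have hY' : B (m - 1) (b - 1) (m - b) d' ≤ 2 ^ G (m-1) ((b:ℤ) - 1) := by
                rw [e1, ed]; exact hY
              have := Nat.mul_le_mul (Nat.mul_le_mul_left m hX') hY'
              exact Nat.add_le_add_left this 2
          _ ≤ 2 * m * (2 ^ G (m-1) ((b:ℤ)) * 2 ^ G (m-1) ((b:ℤ) - 1)) := by
              have h1 : 1 ≤ 2 ^ G (m-1) ((b:ℤ)) := Nat.one_le_two_pow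
              have h2 : 1 ≤ 2 ^ G (m-1) ((b:ℤ) - 1) := Nat.one_le_two_pow
              set X := 2 ^ G (m-1) ((b:ℤ))
              set Y := 2 ^ G (m-1) ((b:ℤ) - 1)
              have hXY : 1 ≤ X * Y := Nat.one_le_iff_ne_zero.2 (by positivity)
              have h7' : 7 ≤ m := h7
              calc 2 + m * X * Y = 2 + m * (X * Y) := by ring
                _ ≤ m * (X * Y) + m * (X * Y) := by
                    have h71 : 7 * 1 ≤ m * (X * Y) := Nat.mul_le_mul h7' hXY
                    linarith
                _ = 2 * m * (X * Y) := by ring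
          _ ≤ 2 ^ W m * (2 ^ G (m-1) ((b:ℤ)) * 2 ^ G (m-1) ((b:ℤ) - 1)) := by
              have := two_mul_le_pow_W m h7
              exact Nat.mul_le_mul_right _ this
          _ = 2 ^ (W m + G (m-1) ((b:ℤ)) + G (m-1) ((b:ℤ) - 1)) := by
              rw [pow_add, pow_add, mul_assoc]
          _ = 2 ^ G m (b:ℤ) := by rw [← hrec]

/-- middle binomial -/
def Z (M : ℕ) : ℕ := M.choose (M / 2)

lemma ch_le_middle (M : ℕ) (r : ℤ) : ch M r ≤ Z M := by
  unfold ch Z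
  split
  · exact Nat.choose_le_middle _ _
  · exact Nat.zero_le _

/-- step: 2·M·Z(M-1) ≤ (M+1)·Z(M) -/
lemma Z_step (M : ℕ) (hM : 1 ≤ M) : 2 * M * Z (M - 1) ≤ (M + 1) * Z M := by
  rcases Nat.even_or_odd M with ⟨r, hr⟩ | ⟨r, hr⟩
  · -- M = 2r
    have hr1 : 1 ≤ r := by omega
    have e1 : M - 1 = 2 * r - 1 := by omega
    have e2 : (2 * r - 1) / 2 = r - 1 := by omega
    have e3 : M / 2 = r := by omega
    have hpascal : (2 * r).choose r = (2 * r - 1).choose (r - 1) + (2 * r - 1).choose r := by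
      have h1 : 2 * r = (2 * r - 1) + 1 := by omega
      have h2 : r = (r - 1) + 1 := by omega
      rw [h1, h2, Nat.choose_succ_succ]
      congr 2 <;> omega
    have hsymm : (2 * r - 1).choose (r - 1) = (2 * r - 1).choose r := by
      have : (2 * r - 1) - r = r - 1 := by omega
      rw [← this, Nat.choose_symm (by omega)]
    have hdouble : (2 * r).choose r = 2 * (2 * r - 1).choose (r - 1) := by omega
    unfold Z
    rw [e1, e2, e3]
    have hM2 : M = 2 * r := by omega
    rw [hM2, hdouble]
    nlinarith [Nat.zero_le ((2 * r - 1).choose (r - 1))]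
  · -- M = 2r + 1
    have e1 : M - 1 = 2 * r := by omega
    have e2 : (2 * r) / 2 = r := by omega
    have e3 : M / 2 = r := by omega
    unfold Z
    rw [e1, e2, e3]
    have hsymm : (2 * r + 1).choose r = (2 * r + 1).choose (r + 1) := by
      have h := Nat.choose_symm (show r + 1 ≤ 2 * r + 1 by omega)
      rw [show 2 * r + 1 - (r + 1) = r by omega] at h
      exact h
    have hmul : (2 * r + 1) * (2 * r).choose r = (2 * r + 1).choose (r + 1) * (r + 1) := by
      have := Nat.add_one_mul_choose_eq (2 * r) r
      simpa [Nat.succ_eq_add_one] using this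
    have hM2 : M = 2 * r + 1 := by omega
    rw [hM2, hsymm]
    nlinarith [hmul]

/-- telescoped: (n-j+1)·2^j·Z(n-j) ≤ (n+1)·Z(n) -/
lemma Z_tel (n : ℕ) : ∀ j ≤ n, (n - j + 1) * 2 ^ j * Z (n - j) ≤ (n + 1) * Z n := by
  intro j
  induction j with
  | zero => intro _; simp
  | succ j ih =>
    intro hj
    have hj' : j ≤ n := by omega
    have hM : 1 ≤ n - j := by omega
    have hstep := Z_step (n - j) hM
    calc (n - (j+1) + 1) * 2 ^ (j+1) * Z (n - (j+1))
        = 2 ^ j * (2 * (n - j) * Z ((n - j) - 1)) := by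
          have e1 : n - (j+1) + 1 = n - j := by omega
          have e2 : n - (j+1) = (n - j) - 1 := by omega
          rw [e1, e2]
          ring
      _ ≤ 2 ^ j * ((n - j + 1) * Z (n - j)) := Nat.mul_le_mul_left _ hstep
      _ = (n - j + 1) * 2 ^ j * Z (n - j) := by ring
      _ ≤ (n + 1) * Z n := ih hj'

/-- wall telescope 1 -/
lemma wall_tel1 (n : ℕ) (hn : 100 ≤ n) :
    ∀ j ≤ n, 100 ^ j * ch (n - j) ((n / 2 : ℕ) : ℤ) ≤ 51 ^ j * Z n := by
  intro j
  induction j with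
  | zero =>
    intro _
    simp only [pow_zero, one_mul, Nat.sub_zero]
    simpa using ch_le_middle n ((n / 2 : ℕ) : ℤ)
  | succ j ih =>
    intro hj
    have hj' : j ≤ n := by omega
    set k := n / 2 with hk
    have hM : 1 ≤ n - j := by omega
    set M := n - j with hMdef
    have hstep : 100 * ch (M - 1) ((k : ℕ) : ℤ) ≤ 51 * ch M ((k : ℕ) : ℤ) := by
      by_cases hkM : k ≤ M - 1
      · have h1 : ch (M - 1) ((k : ℕ) : ℤ) = (M - 1).choose k := by
          unfold ch
          rw [if_pos (by constructor <;> [positivity; exact_mod_cast hkM])]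
          simp
        have h2 : ch M ((k : ℕ) : ℤ) = M.choose k := by
          unfold ch
          rw [if_pos (by constructor <;> [positivity; exact_mod_cast (by omega : k ≤ M)])]
          simp
        rw [h1, h2]
        -- M·C(M-1,k) = (M-k)·C(M,k)
        have hid : M * (M - 1).choose k = (M - k) * M.choose k := by
          have ha : (M - 1).succ * (M - 1).choose k = (M - 1).succ.choose k.succ * k.succ :=
            Nat.add_one_mul_choose_eq (M - 1) k
          have hb := Nat.choose_succ_right_eq M k
          have hM1 : (M - 1).succ = M := by omega
          rw [hM1] at ha
          simp only [Nat.succ_eq_add_one] at ha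
          rw [ha, hb]
          ring
        have hineq : 100 * (M - k) ≤ 51 * M := by omega
        have := Nat.mul_le_mul_left 100 hid.le
        -- 100·M·C(M-1,k) = 100(M-k)C(M,k) ≤ 51·M·C(M,k)
        have key : M * (100 * (M - 1).choose k) ≤ M * (51 * M.choose k) := by
          calc M * (100 * (M - 1).choose k) = 100 * (M * (M - 1).choose k) := by ring
            _ = 100 * ((M - k) * M.choose k) := by rw [hid]
            _ = (100 * (M - k)) * M.choose k := by ring
            _ ≤ (51 * M) * M.choose k := Nat.mul_le_mul_right _ hineq
            _ = M * (51 * M.choose k) := by ring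
        exact Nat.le_of_mul_le_mul_left key (by omega)
      · have h1 : ch (M - 1) ((k : ℕ) : ℤ) = 0 := by
          unfold ch
          split
          · rw [Nat.choose_eq_zero_iff.2]
            omega
          · rfl
        rw [h1]
        simp
    calc 100 ^ (j+1) * ch (n - (j+1)) ((k : ℕ) : ℤ)
        = 100 ^ j * (100 * ch (M - 1) ((k : ℕ) : ℤ)) := by
          have : n - (j+1) = M - 1 := by omega
          rw [this]; ring
      _ ≤ 100 ^ j * (51 * ch M ((k : ℕ) : ℤ)) := Nat.mul_le_mul_left _ hstep
      _ = 51 * (100 ^ j * ch (n - j) ((k : ℕ) : ℤ)) := by rw [← hMdef]; ring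
      _ ≤ 51 * (51 ^ j * Z n) := Nat.mul_le_mul_left _ (ih hj')
      _ = 51 ^ (j+1) * Z n := by ring

/-- window bound -/
lemma HH_le (j m : ℕ) (b : ℤ) : HH j m b ≤ (j - 1) * Z (m - j) := by
  unfold HH
  calc ∑ s ∈ Finset.Icc 1 (j - 1), ch (m - j) (b - (s : ℕ))
      ≤ ∑ _s ∈ Finset.Icc 1 (j - 1), Z (m - j) :=
        Finset.sum_le_sum fun s _ => ch_le_middle _ _
    _ = (j - 1) * Z (m - j) := by
        rw [Finset.sum_const, smul_eq_mul, Nat.card_Icc]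
        congr 1

/-- wall telescope 2: the `k - j` corner. -/
lemma wall_tel2 (n : ℕ) (hn : 100 ≤ n) :
    ∀ j ≤ n, 100 ^ j * ch (n - j) (((n / 2 : ℕ) : ℤ) - (j : ℕ)) ≤ 51 ^ j * Z n := by
  intro j
  induction j with
  | zero =>
    intro _
    simpa using ch_le_middle n (((n / 2 : ℕ) : ℤ) - (0 : ℕ))
  | succ j ih =>
    intro hj
    have hj' : j ≤ n := by omega
    set k := n / 2 with hk
    set M := n - j with hMdef
    have hM : 1 ≤ M := by omega
    set r : ℤ := (k : ℤ) - (j : ℕ) with hr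
    have hstep : 100 * ch (M - 1) (r - 1) ≤ 51 * ch M r := by
      rcases le_or_gt r 0 with h0 | h0
      · have : ch (M - 1) (r - 1) = 0 := by
          unfold ch
          rw [if_neg (by omega)]
        rw [this]
        simp
      · rcases le_or_gt r (M : ℤ) with hM' | hM'
        · -- 1 ≤ r ≤ M
          have h2 : ch M r = M.choose r.toNat := by
            unfold ch
            rw [if_pos ⟨by omega, hM'⟩]
          have h1 : ch (M - 1) (r - 1) = (M - 1).choose (r - 1).toNat := by
            unfold ch
            rw [if_pos ⟨by omega, by push_cast; omega⟩]
          rw [h1, h2]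
          set t : ℕ := (r - 1).toNat with ht
          have hrt : r.toNat = t + 1 := by omega
          rw [hrt]
          -- identity: M · C(M-1, t) = C(M, t+1) · (t+1)
          have ha : (M - 1).succ * (M - 1).choose t = (M - 1).succ.choose t.succ * t.succ :=
              Nat.add_one_mul_choose_eq (M - 1) t
          have hM1 : (M - 1).succ = M := by omega
          rw [hM1] at ha
          simp only [Nat.succ_eq_add_one] at ha
          -- need 100·C(M-1,t) ≤ 51·C(M,t+1); multiply by M
          have hineq : 100 * (t + 1) ≤ 51 * M := by
            have h100 : (t : ℤ) + 1 = r := by omega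
            have hkn : 2 * k ≤ n := by omega
            -- 100 r ≤ 51 M  ⟺ 100(k-j) ≤ 51(n-j)
            have : 100 * r ≤ 51 * (M : ℤ) := by
              rw [hr]
              push_cast
              omega
            omega
          have key : M * (100 * (M - 1).choose t) ≤ M * (51 * M.choose (t + 1)) := by
            calc M * (100 * (M - 1).choose t) = 100 * (M * (M - 1).choose t) := by ring
              _ = 100 * (M.choose (t + 1) * (t + 1)) := by rw [ha]
              _ = (100 * (t + 1)) * M.choose (t + 1) := by ring
              _ ≤ (51 * M) * M.choose (t + 1) := Nat.mul_le_mul_right _ hineq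
              _ = M * (51 * M.choose (t + 1)) := by ring
          exact Nat.le_of_mul_le_mul_left key (by omega)
        · -- r > M : both sides zero-ish
          have hA : ch (M - 1) (r - 1) = 0 := by
            unfold ch
            rw [if_neg (by push_cast; omega)]
          rw [hA]
          simp
    calc 100 ^ (j+1) * ch (n - (j+1)) (((k : ℕ) : ℤ) - ((j+1 : ℕ) : ℕ))
        = 100 ^ j * (100 * ch (M - 1) (r - 1)) := by
          have e1 : n - (j+1) = M - 1 := by omega
          have e2 : ((k : ℕ) : ℤ) - ((j+1 : ℕ) : ℕ) = r - 1 := by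
            rw [hr]; push_cast; ring
          rw [e1, e2]; ring
      _ ≤ 100 ^ j * (51 * ch M r) := Nat.mul_le_mul_left _ hstep
      _ = 51 * (100 ^ j * ch (n - j) r) := by rw [← hMdef]; ring
      _ ≤ 51 * (51 ^ j * Z n) := Nat.mul_le_mul_left _ (ih hj')
      _ = 51 ^ (j+1) * Z n := by ring

/-- W grows slowly (for j ≥ 7). -/
lemma W_succ_le (j : ℕ) (hj : 7 ≤ j) : W (j + 1) ≤ W j + 1 := by
  unfold W
  rw [if_neg (by omega), if_neg (by omega)]
  have : Nat.log 2 (j + 1) ≤ Nat.log 2 j + 1 := by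
    have h2j : j + 1 ≤ j * 2 := by omega
    calc Nat.log 2 (j + 1) ≤ Nat.log 2 (j * 2) := Nat.log_mono_right h2j
      _ = Nat.log 2 j + 1 := Nat.log_mul_base (by norm_num) (by omega)
  omega

lemma W_ge_five (j : ℕ) (hj : 8 ≤ j) : 5 ≤ W j := by
  unfold W
  rw [if_neg (by omega)]
  have h8 : (2:ℕ) ^ 3 ≤ j := by norm_num; omega
  have := (Nat.le_log_iff_pow_le (by norm_num) (by omega)).2 h8
  omega

/-- ratio lemma for the geometric zone: 2·W(j+1)·j ≤ 3·W(j)·(j-1) for j ≥ 13 -/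
lemma ratio_lemma (j : ℕ) (hj : 13 ≤ j) : 2 * (W (j+1) * j) ≤ 3 * (W j * (j - 1)) := by
  obtain ⟨u, rfl⟩ : ∃ u, j = u + 13 := ⟨j - 13, by omega⟩
  have h1 : W (u + 13 + 1) ≤ W (u + 13) + 1 := W_succ_le _ (by omega)
  have h2 : 5 ≤ W (u + 13) := W_ge_five _ (by omega)
  have e : u + 13 - 1 = u + 12 := by omega
  rw [e]
  have hkey : 5 * (u + 10) ≤ W (u + 13) * (u + 10) := Nat.mul_le_mul_right _ h2
  nlinarith [h1, h2, hkey]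

/-- j < 2^(j-1) for j ≥ 3 -/
lemma lt_two_pow_pred : ∀ j, 3 ≤ j → j < 2 ^ (j - 1) := by
  intro j
  induction j with
  | zero => omega
  | succ j ih =>
    intro hj
    rcases eq_or_lt_of_le hj with h3 | h4
    · simp [← h3]
    · have hj3 : 3 ≤ j := by omega
      have := ih hj3
      have e : j + 1 - 1 = (j - 1) + 1 := by omega
      rw [e, pow_succ]
      omega

/-- W ≤ j for j ≥ 6. -/
lemma W_le_self (j : ℕ) (hj : 6 ≤ j) : W j ≤ j := by
  unfold W
  split_ifs with h
  · omega
  · have hlog : Nat.log 2 j < j - 1 := by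
      apply Nat.log_lt_of_lt_pow (by omega)
      exact lt_two_pow_pred j (by omega)
    omega

/-- growth lemma: 100·n³·(n+1) ≤ 2^(n/2+1) for n ≥ 100 -/
lemma pow_big : ∀ n, 100 ≤ n → 100 * n ^ 3 * (n + 1) ≤ 2 ^ (n / 2 + 1) := by
  intro n
  induction n using Nat.strong_induction_on with
  | _ n ih =>
    intro hn
    rcases lt_or_ge n 102 with h | h
    · interval_cases n <;> norm_num
    · have h2 : n - 2 < n := by omega
      have hrec := ih (n - 2) h2 (by omega)
      have hexp : n / 2 + 1 = ((n - 2) / 2 + 1) + 1 := by omega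
      rw [hexp, pow_succ]
      have hpoly : 100 * n ^ 3 * (n + 1) ≤ (100 * (n - 2) ^ 3 * (n - 2 + 1)) * 2 := by
        set m := n - 2 with hm
        have hn2 : n = m + 2 := by omega
        have hm100 : 100 ≤ m := by omega
        rw [hn2]
        nlinarith [hm100, sq_nonneg m, pow_pos (show 0 < m by omega) 3]
      calc 100 * n ^ 3 * (n + 1) ≤ (100 * (n - 2) ^ 3 * (n - 2 + 1)) * 2 := hpoly
        _ ≤ 2 ^ ((n - 2) / 2 + 1) * 2 := Nat.mul_le_mul_right _ hrec

-- W values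
lemma W6 : W 6 = 1 := by unfold W; norm_num
lemma Wval (j : ℕ) (h7 : 7 ≤ j) : W j = Nat.log 2 j + 2 := by unfold W; rw [if_neg (by omega)]
lemma W7 : W 7 = 4 := by
  rw [Wval 7 le_rfl]
  have h : Nat.log 2 7 = 2 := Nat.log_eq_of_pow_le_of_lt_pow (by norm_num) (by norm_num)
  omega
lemma W8 : W 8 = 5 := by
  rw [Wval 8 (by norm_num)]
  have h : Nat.log 2 8 = 3 := Nat.log_eq_of_pow_le_of_lt_pow (by norm_num) (by norm_num)
  omega
lemma W9 : W 9 = 5 := by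
  rw [Wval 9 (by norm_num)]
  have h : Nat.log 2 9 = 3 := Nat.log_eq_of_pow_le_of_lt_pow (by norm_num) (by norm_num)
  omega
lemma W10 : W 10 = 5 := by
  rw [Wval 10 (by norm_num)]
  have h : Nat.log 2 10 = 3 := Nat.log_eq_of_pow_le_of_lt_pow (by norm_num) (by norm_num)
  omega
lemma W11 : W 11 = 5 := by
  rw [Wval 11 (by norm_num)]
  have h : Nat.log 2 11 = 3 := Nat.log_eq_of_pow_le_of_lt_pow (by norm_num) (by norm_num)
  omega
lemma W12 : W 12 = 5 := by
  rw [Wval 12 (by norm_num)]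
  have h : Nat.log 2 12 = 3 := Nat.log_eq_of_pow_le_of_lt_pow (by norm_num) (by norm_num)
  omega
lemma W13 : W 13 = 5 := by
  rw [Wval 13 (by norm_num)]
  have h : Nat.log 2 13 = 3 := Nat.log_eq_of_pow_le_of_lt_pow (by norm_num) (by norm_num)
  omega

/-- key quotient bound : Z(n-j) ≤ ρ·Z(n)/2^j when (n+1) ≤ ρ(n-j+1). -/
lemma Z_bound (n j : ℕ) (hj : j ≤ n) (ρ : ℚ) (hρ : ((n:ℚ) + 1) ≤ ρ * ((n - j : ℕ) + 1)) :
    (Z (n - j) : ℚ) * 2 ^ j ≤ ρ * Z n := by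
  have h1 : (((n - j + 1) * 2 ^ j * Z (n - j) : ℕ) : ℚ) ≤ (((n + 1) * Z n : ℕ) : ℚ) := by
    exact_mod_cast Z_tel n j hj
  push_cast at h1
  have hpos : (0:ℚ) < ((n - j : ℕ) : ℚ) + 1 := by positivity
  have h2 : ((n:ℚ) + 1) * Z n ≤ (ρ * (((n - j : ℕ) : ℚ) + 1)) * Z n := by
    apply mul_le_mul_of_nonneg_right hρ
    positivity
  have h3 : (((n - j : ℕ) : ℚ) + 1) * ((Z (n - j) : ℚ) * 2 ^ j) ≤
      (((n - j : ℕ) : ℚ) + 1) * (ρ * Z n) := by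
    calc (((n - j : ℕ) : ℚ) + 1) * ((Z (n - j) : ℚ) * 2 ^ j)
        = (((n - j : ℕ) : ℚ) + 1) * 2 ^ j * Z (n - j) := by ring
      _ ≤ ((n:ℚ) + 1) * Z n := h1
      _ ≤ (ρ * (((n - j : ℕ) : ℚ) + 1)) * Z n := h2
      _ = (((n - j : ℕ) : ℚ) + 1) * (ρ * Z n) := by ring
  exact le_of_mul_le_mul_left h3 hpos

/-- a zone term bound -/
lemma term_bound (n j : ℕ) (hj6 : 6 ≤ j) (hj : j ≤ n) (b : ℤ) (ρ : ℚ)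
    (hρ : ((n:ℚ) + 1) ≤ ρ * ((n - j : ℕ) + 1)) :
    ((W j * HH j n b : ℕ) : ℚ) ≤ ρ * ((W j * (j-1) : ℕ) : ℚ) / 2 ^ j * Z n := by
  have h1 : (W j * HH j n b : ℕ) ≤ W j * ((j - 1) * Z (n - j)) :=
    Nat.mul_le_mul_left _ (HH_le j n b)
  have h2 : ((W j * HH j n b : ℕ) : ℚ) ≤ ((W j * (j-1) : ℕ) : ℚ) * Z (n - j) := by
    calc ((W j * HH j n b : ℕ) : ℚ) ≤ ((W j * ((j - 1) * Z (n - j)) : ℕ) : ℚ) := by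
          exact_mod_cast h1
      _ = ((W j * (j-1) : ℕ) : ℚ) * Z (n - j) := by push_cast; ring
  have hZ : (Z (n - j) : ℚ) ≤ ρ * Z n / 2 ^ j := by
    have := Z_bound n j hj ρ hρ
    rw [le_div_iff₀ (by positivity)]
    linarith
  calc ((W j * HH j n b : ℕ) : ℚ) ≤ ((W j * (j-1) : ℕ) : ℚ) * (ρ * Z n / 2 ^ j) := by
        refine le_trans h2 ?_
        apply mul_le_mul_of_nonneg_left hZ
        positivity
    _ = ρ * ((W j * (j-1) : ℕ) : ℚ) / 2 ^ j * Z n := by ring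

/-- the geometric sequence -/
noncomputable def aQ (j : ℕ) : ℚ := ((W j * (j - 1) : ℕ) : ℚ) / 2 ^ j

lemma aQ_nonneg (j : ℕ) : 0 ≤ aQ j := by unfold aQ; positivity

lemma aQ_ratio (j : ℕ) (hj : 13 ≤ j) : 4 * aQ (j + 1) ≤ 3 * aQ j := by
  unfold aQ
  rw [mul_div_assoc', mul_div_assoc', div_le_div_iff₀ (by positivity) (by positivity)]
  have h := ratio_lemma j hj
  have hc : ((2 * (W (j+1) * j) : ℕ) : ℚ) ≤ ((3 * (W j * (j - 1)) : ℕ) : ℚ) := by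
    exact_mod_cast h
  push_cast at hc
  have e : j + 1 - 1 = j := by omega
  rw [e, pow_succ]
  push_cast at hc ⊢
  nlinarith [mul_le_mul_of_nonneg_right hc (show (0:ℚ) ≤ 2 ^ j by positivity)]

lemma geo_sum (L : ℕ) (hL : 12 ≤ L) :
    (∑ j ∈ Finset.Icc 13 L, aQ j) + 4 * aQ (L + 1) ≤ 4 * aQ 13 := by
  induction L, hL using Nat.le_induction with
  | base =>
    have : Finset.Icc 13 12 = (∅ : Finset ℕ) := by
      apply Finset.Icc_eq_empty
      omega
    rw [this]
    simp
  | succ L hL ih =>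
    rw [Finset.sum_Icc_succ_top (by omega)]
    have h4 := aQ_ratio (L + 1) (by omega)
    linarith

/-- wall geometric sequence -/
noncomputable def wQ (j : ℕ) : ℚ := (51 / 100 : ℚ) ^ j

lemma wQ_nonneg (j : ℕ) : 0 ≤ wQ j := by unfold wQ; positivity

lemma geoW_sum (L : ℕ) (hL : 5 ≤ L) :
    (∑ j ∈ Finset.Icc 6 L, wQ j) + (100 / 49) * wQ (L + 1) ≤ (100 / 49) * wQ 6 := by
  induction L, hL using Nat.le_induction with
  | base =>
    have : Finset.Icc 6 5 = (∅ : Finset ℕ) := by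
      apply Finset.Icc_eq_empty
      omega
    rw [this]
    simp
  | succ L hL ih =>
    rw [Finset.sum_Icc_succ_top (by omega)]
    have hw : wQ (L + 2) = (51 / 100) * wQ (L + 1) := by
      unfold wQ
      rw [pow_succ]
      ring
    have : wQ (L + 1) + (100 / 49) * wQ (L + 2) = (100 / 49) * wQ (L + 1) := by
      rw [hw]
      ring
    linarith

/-- Per-term wall bound in ℚ. -/
lemma wall_term_le (n : ℕ) (hn : 100 ≤ n) (j : ℕ) (hj : j ≤ n) :
    ((wall j n ((n / 2 : ℕ) : ℤ) : ℕ) : ℚ) ≤ 2 * wQ j * Z n := by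
  have h1 := wall_tel1 n hn j hj
  have h2 := wall_tel2 n hn j hj
  have hc1 : ((100 ^ j * ch (n - j) ((n / 2 : ℕ) : ℤ) : ℕ) : ℚ) ≤ ((51 ^ j * Z n : ℕ) : ℚ) := by
    exact_mod_cast h1
  have hc2 : ((100 ^ j * ch (n - j) (((n / 2 : ℕ) : ℤ) - (j : ℕ)) : ℕ) : ℚ) ≤
      ((51 ^ j * Z n : ℕ) : ℚ) := by
    exact_mod_cast h2
  push_cast at hc1 hc2
  have hp : (0:ℚ) < 100 ^ j := by positivity
  have e1 : (ch (n - j) ((n / 2 : ℕ) : ℤ) : ℚ) ≤ wQ j * Z n := by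
    unfold wQ
    rw [div_pow]
    rw [div_mul_eq_mul_div, le_div_iff₀ hp]
    calc (ch (n - j) ((n / 2 : ℕ) : ℤ) : ℚ) * 100 ^ j
        = 100 ^ j * ch (n - j) ((n / 2 : ℕ) : ℤ) := by ring
      _ ≤ 51 ^ j * Z n := hc1
  have e2 : (ch (n - j) (((n / 2 : ℕ) : ℤ) - (j : ℕ)) : ℚ) ≤ wQ j * Z n := by
    unfold wQ
    rw [div_pow]
    rw [div_mul_eq_mul_div, le_div_iff₀ hp]
    calc (ch (n - j) (((n / 2 : ℕ) : ℤ) - (j : ℕ)) : ℚ) * 100 ^ j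
        = 100 ^ j * ch (n - j) (((n / 2 : ℕ) : ℤ) - (j : ℕ)) := by ring
      _ ≤ 51 ^ j * Z n := hc2
  unfold wall
  rw [Nat.cast_add]
  linarith

/-- Total wall bound. -/
lemma wall_total (n : ℕ) (hn : 100 ≤ n) :
    (∑ j ∈ Finset.Icc 6 n, ((wall j n ((n / 2 : ℕ) : ℤ) : ℕ) : ℚ)) ≤ (8 / 100) * Z n := by
  have hstep : (∑ j ∈ Finset.Icc 6 n, ((wall j n ((n / 2 : ℕ) : ℤ) : ℕ) : ℚ))
      ≤ ∑ j ∈ Finset.Icc 6 n, 2 * wQ j * Z n := by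
    apply Finset.sum_le_sum
    intro j hj
    rw [Finset.mem_Icc] at hj
    exact wall_term_le n hn j hj.2
  have hgeo := geoW_sum n (by omega)
  have hsum : (∑ j ∈ Finset.Icc 6 n, wQ j) ≤ (100 / 49) * wQ 6 := by
    have hnn := wQ_nonneg (n + 1)
    linarith
  calc (∑ j ∈ Finset.Icc 6 n, ((wall j n ((n / 2 : ℕ) : ℤ) : ℕ) : ℚ))
      ≤ ∑ j ∈ Finset.Icc 6 n, 2 * wQ j * Z n := hstep
    _ = 2 * (∑ j ∈ Finset.Icc 6 n, wQ j) * Z n := by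
        rw [← Finset.sum_mul, ← Finset.mul_sum]
    _ ≤ 2 * ((100 / 49) * wQ 6) * Z n := by
        have hZ : (0:ℚ) ≤ Z n := by positivity
        nlinarith [hsum, hZ]
    _ ≤ (8 / 100) * Z n := by
        have hZ : (0:ℚ) ≤ Z n := by positivity
        have : 2 * ((100 / 49) * wQ 6) ≤ (8 / 100 : ℚ) := by
          unfold wQ
          norm_num
        nlinarith [this, hZ]

lemma zone6 (n : ℕ) (hn : 100 ≤ n) :
    ((W 6 * HH 6 n ((n / 2 : ℕ) : ℤ) : ℕ) : ℚ) ≤ (1 / 12) * Z n := by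
  have hb := term_bound n 6 le_rfl (by omega) ((n / 2 : ℕ) : ℤ) (16 / 15) ?_
  · refine le_trans hb ?_
    have : ((W 6 * (6 - 1) : ℕ) : ℚ) = 5 := by rw [W6]; norm_num
    rw [this]
    have hZ : (0:ℚ) ≤ Z n := by positivity
    nlinarith
  · have h15 : 15 * (n + 1) ≤ 16 * (n - 6 + 1) := by omega
    have := (Nat.cast_le (α := ℚ)).2 h15
    push_cast at this
    linarith

lemma zone712 (n : ℕ) (hn : 100 ≤ n) :
    (∑ j ∈ Finset.Icc 7 12, ((W j * HH j n ((n / 2 : ℕ) : ℤ) : ℕ) : ℚ))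
      ≤ (101 / 89) * (1983 / 4096) * Z n := by
  have hterm : ∀ j ∈ Finset.Icc 7 12,
      ((W j * HH j n ((n / 2 : ℕ) : ℤ) : ℕ) : ℚ)
        ≤ (101 / 89) * ((W j * (j - 1) : ℕ) : ℚ) / 2 ^ j * Z n := by
    intro j hj
    rw [Finset.mem_Icc] at hj
    apply term_bound n j (by omega) (by omega)
    have h89 : 89 * (n + 1) ≤ 101 * (n - j + 1) := by omega
    have := (Nat.cast_le (α := ℚ)).2 h89
    push_cast at this
    linarith
  calc (∑ j ∈ Finset.Icc 7 12, ((W j * HH j n ((n / 2 : ℕ) : ℤ) : ℕ) : ℚ))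
      ≤ ∑ j ∈ Finset.Icc 7 12, (101 / 89) * ((W j * (j - 1) : ℕ) : ℚ) / 2 ^ j * Z n :=
        Finset.sum_le_sum hterm
    _ = (101 / 89) * (1983 / 4096) * Z n := by
        have e : (Finset.Icc 7 12 : Finset ℕ) = {7, 8, 9, 10, 11, 12} := by decide
        rw [e]
        rw [Finset.sum_insert (by decide), Finset.sum_insert (by decide),
          Finset.sum_insert (by decide), Finset.sum_insert (by decide),
          Finset.sum_insert (by decide), Finset.sum_singleton]
        norm_num [W7, W8, W9, W10, W11, W12]
        ring

lemma zone13 (n : ℕ) (hn : 100 ≤ n) :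
    (∑ j ∈ Finset.Icc 13 (n / 2), ((W j * HH j n ((n / 2 : ℕ) : ℤ) : ℕ) : ℚ))
      ≤ (15 / 256) * Z n := by
  have hterm : ∀ j ∈ Finset.Icc 13 (n / 2),
      ((W j * HH j n ((n / 2 : ℕ) : ℤ) : ℕ) : ℚ) ≤ 2 * aQ j * Z n := by
    intro j hj
    rw [Finset.mem_Icc] at hj
    have hb := term_bound n j (by omega) (by omega) ((n / 2 : ℕ) : ℤ) 2 ?_
    · refine le_trans hb ?_
      unfold aQ
      apply le_of_eq
      ring
    · have h2 : n + 1 ≤ 2 * (n - j + 1) := by omega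
      have := (Nat.cast_le (α := ℚ)).2 h2
      push_cast at this
      linarith
  calc (∑ j ∈ Finset.Icc 13 (n / 2), ((W j * HH j n ((n / 2 : ℕ) : ℤ) : ℕ) : ℚ))
      ≤ ∑ j ∈ Finset.Icc 13 (n / 2), 2 * aQ j * Z n := Finset.sum_le_sum hterm
    _ = 2 * (∑ j ∈ Finset.Icc 13 (n / 2), aQ j) * Z n := by
        rw [← Finset.sum_mul, ← Finset.mul_sum]
    _ ≤ 2 * (4 * aQ 13) * Z n := by
        have hgeo := geo_sum (n / 2) (by omega)
        have h1 : (∑ j ∈ Finset.Icc 13 (n / 2), aQ j) ≤ 4 * aQ 13 := by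
          have := aQ_nonneg (n / 2 + 1)
          linarith
        have hZ : (0:ℚ) ≤ Z n := by positivity
        nlinarith
    _ ≤ (15 / 256) * Z n := by
        have ha : aQ 13 = 60 / 8192 := by
          unfold aQ
          rw [show W 13 * (13 - 1) = 60 by rw [W13]]
          norm_num
        rw [ha]
        have hZ : (0:ℚ) ≤ Z n := by positivity
        nlinarith

lemma zone_high (n : ℕ) (hn : 100 ≤ n) :
    (∑ j ∈ Finset.Icc (n / 2 + 1) n, ((W j * HH j n ((n / 2 : ℕ) : ℤ) : ℕ) : ℚ))
      ≤ (1 / 100) * Z n := by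
  set M : ℚ := ((n : ℚ) * n * ((n:ℚ) + 1) / 2 ^ (n / 2 + 1)) * Z n with hM
  have hterm : ∀ j ∈ Finset.Icc (n / 2 + 1) n,
      ((W j * HH j n ((n / 2 : ℕ) : ℤ) : ℕ) : ℚ) ≤ M := by
    intro j hj
    rw [Finset.mem_Icc] at hj
    have hj6 : 6 ≤ j := by omega
    have hb := term_bound n j hj6 hj.2 ((n / 2 : ℕ) : ℤ) ((n:ℚ) + 1) ?_
    · refine le_trans hb ?_
      rw [hM]
      have hWj : ((W j * (j - 1) : ℕ) : ℚ) ≤ (n : ℚ) * n := by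
        have h1 : W j * (j - 1) ≤ n * n :=
          Nat.mul_le_mul (le_trans (W_le_self j hj6) hj.2) (by omega)
        exact_mod_cast h1
      have hpow : (2:ℚ) ^ (n / 2 + 1) ≤ 2 ^ j := by
        apply pow_le_pow_right₀ (by norm_num)
        omega
      have hZ : (0:ℚ) ≤ Z n := by positivity
      have h2j : (0:ℚ) < 2 ^ j := by positivity
      have h2n : (0:ℚ) < 2 ^ (n / 2 + 1) := by positivity
      apply mul_le_mul_of_nonneg_right _ hZ
      rw [div_le_div_iff₀ h2j h2n]
      calc ((n:ℚ) + 1) * ((W j * (j - 1) : ℕ) : ℚ) * 2 ^ (n / 2 + 1)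
          ≤ ((n:ℚ) + 1) * ((n : ℚ) * n) * 2 ^ j := by
            apply mul_le_mul
            · apply mul_le_mul_of_nonneg_left hWj (by positivity)
            · exact hpow
            · positivity
            · positivity
        _ = (n : ℚ) * n * ((n:ℚ) + 1) * 2 ^ j := by ring
    · have h0 : (0:ℚ) ≤ ((n - j : ℕ) : ℚ) := by positivity
      have h1 : (0:ℚ) ≤ (n : ℚ) := by positivity
      nlinarith
  calc (∑ j ∈ Finset.Icc (n / 2 + 1) n, ((W j * HH j n ((n / 2 : ℕ) : ℤ) : ℕ) : ℚ))
      ≤ (Finset.Icc (n / 2 + 1) n).card • M := Finset.sum_le_card_nsmul _ _ _ hterm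
    _ ≤ (n : ℚ) * M := by
        rw [nsmul_eq_mul]
        apply mul_le_mul_of_nonneg_right
        · rw [Nat.card_Icc]
          have : (n + 1 - (n / 2 + 1)) ≤ n := by omega
          exact_mod_cast this
        · rw [hM]
          positivity
    _ ≤ (1 / 100) * Z n := by
        rw [hM]
        have hpow := pow_big n hn
        have hc : ((100 * n ^ 3 * (n + 1) : ℕ) : ℚ) ≤ ((2 ^ (n / 2 + 1) : ℕ) : ℚ) := by
          exact_mod_cast hpow
        push_cast at hc
        have h2n : (0:ℚ) < 2 ^ (n / 2 + 1) := by positivity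
        have hZ : (0:ℚ) ≤ Z n := by positivity
        rw [show (n:ℚ) * ((n:ℚ) * n * ((n:ℚ) + 1) / 2 ^ (n / 2 + 1) * Z n)
            = ((n:ℚ) * n * n * ((n:ℚ) + 1) / 2 ^ (n / 2 + 1)) * Z n by ring]
        apply mul_le_mul_of_nonneg_right _ hZ
        rw [div_le_iff₀ h2n]
        nlinarith [hc]

lemma Ioc_eq_Icc (a b : ℕ) : Finset.Ioc a b = Finset.Icc (a + 1) b := by
  ext x
  simp only [Finset.mem_Ioc, Finset.mem_Icc]
  omega

/-- The main numeric estimate. -/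
lemma G_lt_choose (n : ℕ) (hn : 100 ≤ n) :
    G n ((n / 2 : ℕ) : ℤ) < n.choose (n / 2) := by
  set k : ℤ := ((n / 2 : ℕ) : ℤ) with hk
  have hCpos : 0 < n.choose (n / 2) := Nat.choose_pos (by omega)
  have hZC : Z n = n.choose (n / 2) := rfl
  -- work in ℚ
  have hQ : ((G n k : ℕ) : ℚ) ≤ (9 / 10) * Z n := by
    have hGsum : ((G n k : ℕ) : ℚ)
        = (∑ j ∈ Finset.Icc 6 n, ((W j * HH j n k : ℕ) : ℚ))
          + ∑ j ∈ Finset.Icc 6 n, ((wall j n k : ℕ) : ℚ) := by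
      unfold G
      push_cast
      rw [Finset.sum_add_distrib]
    -- split the main sum into zones
    have hIcc : Finset.Icc 6 n = Finset.Ioc 5 n := by
      rw [Ioc_eq_Icc]
    have hsplit : (∑ j ∈ Finset.Icc 6 n, ((W j * HH j n k : ℕ) : ℚ))
        = (∑ j ∈ Finset.Ioc 5 6, ((W j * HH j n k : ℕ) : ℚ))
          + (∑ j ∈ Finset.Ioc 6 12, ((W j * HH j n k : ℕ) : ℚ))
          + (∑ j ∈ Finset.Ioc 12 (n / 2), ((W j * HH j n k : ℕ) : ℚ))
          + (∑ j ∈ Finset.Ioc (n / 2) n, ((W j * HH j n k : ℕ) : ℚ)) := by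
      rw [hIcc]
      rw [← Finset.sum_Ioc_consecutive _ (by omega : 5 ≤ 6) (by omega : 6 ≤ n)]
      rw [← Finset.sum_Ioc_consecutive _ (by omega : 6 ≤ 12) (by omega : 12 ≤ n)]
      rw [← Finset.sum_Ioc_consecutive _ (by omega : 12 ≤ n / 2) (by omega : n / 2 ≤ n)]
      ring
    have h6 : (∑ j ∈ Finset.Ioc 5 6, ((W j * HH j n k : ℕ) : ℚ)) ≤ (1 / 12) * Z n := by
      rw [Ioc_eq_Icc, show (5 + 1) = 6 from rfl, Finset.Icc_self, Finset.sum_singleton]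
      exact zone6 n hn
    have h712 : (∑ j ∈ Finset.Ioc 6 12, ((W j * HH j n k : ℕ) : ℚ))
        ≤ (101 / 89) * (1983 / 4096) * Z n := by
      rw [Ioc_eq_Icc]
      exact zone712 n hn
    have h13 : (∑ j ∈ Finset.Ioc 12 (n / 2), ((W j * HH j n k : ℕ) : ℚ))
        ≤ (15 / 256) * Z n := by
      rw [Ioc_eq_Icc]
      exact zone13 n hn
    have hhigh : (∑ j ∈ Finset.Ioc (n / 2) n, ((W j * HH j n k : ℕ) : ℚ))
        ≤ (1 / 100) * Z n := by
      rw [Ioc_eq_Icc]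
      exact zone_high n hn
    have hwall := wall_total n hn
    have hZ : (0:ℚ) ≤ Z n := by positivity
    rw [hGsum, hsplit]
    have hconst : (1 / 12 : ℚ) + (101 / 89) * (1983 / 4096) + 15 / 256 + 1 / 100 + 8 / 100
        ≤ 9 / 10 := by norm_num
    nlinarith [h6, h712, h13, hhigh, hwall, hZ, hconst]
  -- conclude in ℕ
  have hlt : ((G n k : ℕ) : ℚ) < ((n.choose (n / 2) : ℕ) : ℚ) := by
    have h1 : (1:ℚ) ≤ Z n := by
      rw [hZC]
      exact_mod_cast hCpos
    calc ((G n k : ℕ) : ℚ) ≤ (9 / 10) * Z n := hQ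
      _ < 1 * Z n := by nlinarith
      _ = ((n.choose (n / 2) : ℕ) : ℚ) := by rw [one_mul, hZC]
  exact_mod_cast hlt


instance fintypeSlice (n k : ℕ) : Fintype (Slice n k) :=
  inferInstanceAs (Fintype {A : Finset (Fin n) // A.card = k})

instance decEqSlice (n k : ℕ) : DecidableEq (Slice n k) :=
  inferInstanceAs (DecidableEq {A : Finset (Fin n) // A.card = k})

lemma card_slice (n k : ℕ) : Fintype.card (Slice n k) = n.choose k := by
  rw [show Fintype.card (Slice n k)
      = Fintype.card {A : Finset (Fin n) // A.card = k} from rfl]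
  rw [Fintype.card_finset_len, Fintype.card_fin]

/-- The hard function exists. -/
lemma exists_hard (n : ℕ) (hn : 100 ≤ n) :
    ∃ f : Slice n (n / 2) → Bool, ∀ T : DecTree n, T.depth ≤ n - 6 → ¬Computes T f := by
  by_contra hcon
  push_neg at hcon
  set k := n / 2 with hk
  -- every function is computed by a canonical tree
  have hsurj : ∀ f : Slice n k → Bool,
      ∃ T' ∈ CT n Finset.univ k (n - k) (n - 6), Computes T' f := by
    intro f
    obtain ⟨T, hdT, hcT⟩ := hcon f
    obtain ⟨T', hT'mem, hT'⟩ := canon (show k ≤ n by omega) T (n - 6) ∅ ∅ hdT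
      (by simp) (by simp) (by simp)
    refine ⟨T', by simpa using hT'mem, fun A => ?_⟩
    rw [hT' A.val A.2 (by simp) (by simp)]
    exact hcT A
  -- cardinality contradiction
  set S := CT n Finset.univ k (n - k) (n - 6) with hS
  have hcard1 : Fintype.card (Slice n k → Bool) ≤ S.card := by
    have hφ : Function.Surjective (fun (T : {T // T ∈ S}) => (fun A => (T : DecTree n).eval A.val : Slice n k → Bool)) := by
      intro f
      obtain ⟨T', hmem, hcomp⟩ := hsurj f
      exact ⟨⟨T', hmem⟩, funext fun A => hcomp A⟩
    calc Fintype.card (Slice n k → Bool) ≤ Fintype.card {T // T ∈ S} :=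
          Fintype.card_le_of_surjective _ hφ
      _ = S.card := Fintype.card_coe S
  have hcard2 : S.card ≤ B n k (n - k) (n - 6) := by
    have := card_CT_le (n := n) Finset.univ k (n - k) (n - 6)
    rwa [Finset.card_univ, Fintype.card_fin] at this
  have hcard3 : B n k (n - k) (n - 6) ≤ 2 ^ G n (k : ℤ) :=
    B_le_pow_G n (by omega) k (by omega)
  have hcard4 : 2 ^ G n (k : ℤ) < 2 ^ n.choose k := by
    apply Nat.pow_lt_pow_right (by norm_num)
    exact G_lt_choose n hn
  have hfun : Fintype.card (Slice n k → Bool) = 2 ^ n.choose k := by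
    rw [Fintype.card_fun, card_slice, Fintype.card_bool]
  omega

end Hard

/-- For every integer `n ≥ 100` and `k = ⌊n/2⌋`, one has `E_k(n) ≤ 5`:
there is a Boolean function on the middle slice with query complexity `≥ n - 5`. -/
theorem stmt_1 (n : ℕ) (hn : 100 ≤ n) :
    Equery n (n / 2) ≤ 5 ∧
    ∃ f : Slice n (n / 2) → Bool, n - 5 ≤ Dquery n (n / 2) f := by
  obtain ⟨f, hf⟩ := Hard.exists_hard n hn
  have hDf : n - 5 ≤ Dquery n (n / 2) f := by
    have hne : {d : ℕ | ∃ T : DecTree n, T.depth ≤ d ∧ Computes T f}.Nonempty := by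
      obtain ⟨T, hd, hc⟩ := Hard.exists_full_tree f
      exact ⟨n, T, hd, hc⟩
    have hmem : ∃ T : DecTree n, T.depth ≤ Dquery n (n / 2) f ∧ Computes T f :=
      Nat.sInf_mem hne
    obtain ⟨T, hdT, hcT⟩ := hmem
    by_contra hlt
    push_neg at hlt
    have : T.depth ≤ n - 6 := by omega
    exact hf T this hcT
  have hDmax : n - 5 ≤ Dmax n (n / 2) := by
    have hbdd : BddAbove {d : ℕ | ∃ g : Slice n (n / 2) → Bool, Dquery n (n / 2) g = d} := by
      refine ⟨n, fun d hd => ?_⟩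
      obtain ⟨g, rfl⟩ := hd
      obtain ⟨T, hdT, hcT⟩ := Hard.exists_full_tree g
      exact Nat.sInf_le ⟨T, hdT, hcT⟩
    have hmem : Dquery n (n / 2) f ∈
        {d : ℕ | ∃ g : Slice n (n / 2) → Bool, Dquery n (n / 2) g = d} := ⟨f, rfl⟩
    exact le_trans hDf (le_csSup hbdd hmem)
  constructor
  · unfold Equery
    omega
  · exact ⟨f, hDf⟩
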